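/- arXiv:2209.14938 — 2 statements merged into one kernel-verified Lean document; each statement's English description precedes it below -/
import Mathlib

section
/- In a tree of transitive tournaments with a unique source, the unique shortest undirected trail between any two distinct nodes u, v is either a directed path from u to v, a directed path from v to u, or the concatenation of two directed paths p(w,u) and p(w,v) issuing from some common node w distinct from u and v; in particular, the trail contains no node whose two neighbors on the trail both point into it. -/
open scoped Classical

universe u

variable {V : Type u}

/-- The undirected skeleton of a directed graph given by edge relation `E`. -/
def skeleton (E : V → V → Prop) : SimpleGraph V where
  Adj u v := u ≠ v ∧ (E u v ∨ E v u)
  symm := ⟨fun u v h => ⟨h.1.symm, h.2.symm⟩⟩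
  loopless := ⟨fun v h => h.1 rfl⟩

/-- A set of vertices is biconnected if the induced subgraph is connected and
remains connected after removal of any single vertex. -/
def IsBiconnected (G : SimpleGraph V) (S : Set V) : Prop :=
  (G.induce S).Connected ∧ ∀ v ∈ S, (G.induce (S \ {v})).Connected

/-- A block graph: every maximal biconnected set of vertices is a clique. -/
def IsBlockGraph (G : SimpleGraph V) : Prop :=
  ∀ S : Set V, IsBiconnected G S →
    (∀ S', S ⊆ S' → IsBiconnected G S' → S = S') → G.IsClique S

/-- A tree of transitive tournaments: a (finite) directed acyclic graph that is
connected and whose skeleton is a block graph. -/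
def IsTTT (E : V → V → Prop) : Prop :=
  (∀ v, ¬ Relation.TransGen E v v) ∧ (skeleton E).Connected ∧ IsBlockGraph (skeleton E)

/-- `l` is the full vertex sequence of a directed path from `a` to `b`. -/
def IsDirSeq (E : V → V → Prop) (a b : V) (l : List V) : Prop :=
  l.Chain' E ∧ l.head? = some a ∧ l.getLast? = some b

/-- A maximal clique of a simple graph. -/
def IsMaxClique (G : SimpleGraph V) (S : Set V) : Prop :=
  G.IsClique S ∧ ∀ S', G.IsClique S' → S ⊆ S' → S = S'

/-- The product of the edge weights along a vertex sequence. -/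
def prodAlong (c : V → V → ℝ) : List V → ℝ
  | [] => 1
  | [_] => 1
  | a :: b :: rest => c a b * prodAlong c (b :: rest)

lemma chain'_transGen {E : V → V → Prop} :
    ∀ {l : List V} {y z : V}, (y :: l).Chain' E → z ∈ l → Relation.TransGen E y z := by
  intro l
  induction l with
  | nil => intro y z _ h; simp at h
  | cons w l ih =>
    intro y z h hz
    have hyw : E y w := (List.isChain_cons_cons.mp h).1
    rcases List.mem_cons.mp hz with rfl | hz
    · exact Relation.TransGen.single hyw
    · exact (Relation.TransGen.single hyw).trans (ih (List.isChain_cons_cons.mp h).2 hz)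

lemma chain'_nodup {E : V → V → Prop} (hirr : ∀ v, ¬ Relation.TransGen E v v) :
    ∀ {l : List V}, l.Chain' E → l.Nodup := by
  intro l
  induction l with
  | nil => intro; simp
  | cons y l ih =>
    intro h
    refine List.nodup_cons.mpr ⟨fun hy => hirr y (chain'_transGen h hy), ih h.tail⟩

lemma mem_of_getLast?' {l : List V} {z : V} (h : l.getLast? = some z) : z ∈ l := by
  cases l with
  | nil => simp at h
  | cons a l =>
    rw [List.getLast?_eq_getLast (l := a :: l) (by simp)] at h
    have := List.getLast_mem (l := a :: l) (by simp)
    rwa [Option.some_inj.mp h] at this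

lemma chain'_to_getLast {E : V → V → Prop} {l : List V} {y z : V}
    (h : l.Chain' E) (hy : y ∈ l) (hz : l.getLast? = some z) :
    y = z ∨ Relation.TransGen E y z := by
  obtain ⟨l1, l2, rfl⟩ := List.append_of_mem hy
  cases l2 with
  | nil =>
    left
    rw [List.getLast?_append] at hz
    simpa using hz
  | cons w l2 =>
    right
    have h2 : (y :: w :: l2).Chain' E := h.infix ⟨l1, [], by simp⟩
    have hz' : (w :: l2).getLast? = some z := by
      rw [List.getLast?_append] at hz
      simpa using hz
    have hzmem : z ∈ w :: l2 := mem_of_getLast?' hz'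
    exact chain'_transGen h2 hzmem

lemma reach_head {G : SimpleGraph V} {S : Set V} :
    ∀ (l : List V) (z : V), (z :: l).Chain' G.Adj → ∀ (hS : ∀ y ∈ z :: l, y ∈ S),
      ∀ y (hy : y ∈ z :: l),
        (G.induce S).Reachable ⟨z, hS z (by simp)⟩ ⟨y, hS y hy⟩ := by
  intro l
  induction l with
  | nil =>
    intro z _ hS y hy
    rcases List.mem_singleton.mp hy with rfl
    exact SimpleGraph.Reachable.refl _
  | cons w l ih =>
    intro z h hS y hy
    have hzw : (G.induce S).Adj ⟨z, hS z (by simp)⟩ ⟨w, hS w (by simp)⟩ :=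
      (List.isChain_cons_cons.mp h).1
    rcases List.mem_cons.mp hy with rfl | hy
    · exact SimpleGraph.Reachable.refl _
    · exact (hzw.reachable).trans
        (ih w (List.isChain_cons_cons.mp h).2 (fun y hy => hS y (List.mem_cons_of_mem _ hy)) y hy)

lemma connected_of_chain (G : SimpleGraph V) (S : Set V) (l : List V) (hne : l ≠ [])
    (hc : l.Chain' G.Adj) (hsub : ∀ y ∈ l, y ∈ S) (hcov : ∀ y ∈ S, y ∈ l) :
    (G.induce S).Connected := by
  cases l with
  | nil => exact absurd rfl hne
  | cons z l =>
    haveI : Nonempty S := ⟨⟨z, hsub z (by simp)⟩⟩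
    refine SimpleGraph.Connected.mk ?_
    rintro ⟨a, ha⟩ ⟨b, hb⟩
    have ra := reach_head (G := G) l z hc hsub a (hcov a ha)
    have rb := reach_head (G := G) l z hc hsub b (hcov b hb)
    exact ra.symm.trans rb

lemma reaches_from_source {E : V → V → Prop} [Finite V]
    (hirr : ∀ v, ¬ Relation.TransGen E v v) {s : V}
    (hs : ∀ v, (∀ w, ¬ E w v) → v = s) :
    ∀ v, ∃ l : List V, l.Chain' E ∧ l.head? = some s ∧ l.getLast? = some v := by
  haveI : IsTrans V (Relation.TransGen E) := ⟨fun a b c => Relation.TransGen.trans⟩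
  haveI : IsIrrefl V (Relation.TransGen E) := ⟨hirr⟩
  have wf := Finite.wellFounded_of_trans_of_irrefl (Relation.TransGen E)
  intro v
  induction v using wf.induction with
  | _ v ih =>
    by_cases h : ∀ w, ¬ E w v
    · refine ⟨[s], List.isChain_singleton _, by simp, by simp [hs v h]⟩
    · push_neg at h
      obtain ⟨w, hw⟩ := h
      obtain ⟨l, hc, hh, hl⟩ := ih w (Relation.TransGen.single hw)
      refine ⟨l ++ [v], ?_, ?_, List.getLast?_concat⟩
      · refine List.IsChain.append hc (by simp) ?_
        intro x hx y hy
        simp only [List.head?_cons, Option.mem_def, Option.some_inj] at hy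
        subst hy
        rw [hl] at hx
        simp only [Option.mem_def, Option.some_inj] at hx
        subst hx; exact hw
      · cases l with
        | nil => simp at hl
        | cons a l => simpa using hh

lemma adj_of_E {E : V → V → Prop} (hirr : ∀ v, ¬ Relation.TransGen E v v) {y z : V} (h : E y z) :
    (skeleton E).Adj y z :=
  show y ≠ z ∧ (E y z ∨ E z y) from
  ⟨by rintro rfl; exact absurd (Relation.TransGen.single h) (hirr y), Or.inl h⟩

lemma chainE_adj {E : V → V → Prop} (hirr : ∀ v, ¬ Relation.TransGen E v v) {l : List V}
    (h : l.Chain' E) : l.Chain' (skeleton E).Adj :=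
  h.imp (fun _ _ => adj_of_E hirr)

lemma chain_adj_rev {G : SimpleGraph V} {l : List V} (h : l.Chain' G.Adj) :
    l.reverse.Chain' G.Adj :=
  List.isChain_reverse.mpr (h.imp (fun _ _ hab => hab.symm))

lemma head_eq_of_head? {l : List V} {a : V} (h : l.head? = some a) : ∃ t, l = a :: t := by
  cases l with
  | nil => simp at h
  | cons b t => exact ⟨t, by simpa using (by simpa using h : b = a) ▸ rfl⟩

lemma remove_connected {E : V → V → Prop} (hirr : ∀ v, ¬ Relation.TransGen E v v)
    {p q : List V} {a b c x v : V}
    (hp : p.Chain' E) (hq : q.Chain' E)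
    (hpc : p.head? = some c) (hqc : q.head? = some c)
    (hpa : p.getLast? = some a) (hqb : q.getLast? = some b)
    (hax : E a x) (hbx : E b x)
    (hxp : x ∉ p) (hxq : x ∉ q)
    (hint : ∀ y, y ∈ p → y ∈ q → y = c)
    (hv : v ∈ p) :
    ((skeleton E).induce ({y | y ∈ p ∨ y ∈ q ∨ y = x} \ {v})).Connected := by
  obtain ⟨qt, rfl⟩ := head_eq_of_head? hqc
  obtain ⟨p1, p2, rfl⟩ := List.append_of_mem hv
  have hnp : (p1 ++ v :: p2).Nodup := chain'_nodup hirr hp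
  have hnq : (c :: qt).Nodup := chain'_nodup hirr hq
  have hvp1 : v ∉ p1 := by
    rcases List.nodup_append'.mp hnp with ⟨_, _, hd⟩
    exact fun hmem => hd hmem (by simp)
  have hvp2 : v ∉ p2 := by
    rcases List.nodup_append'.mp hnp with ⟨_, h2, _⟩
    exact (List.nodup_cons.mp h2).1
  have hcqt : c ∉ qt := (List.nodup_cons.mp hnq).1
  have hp1c : p1 ≠ [] → p1.head? = some c := by
    cases p1 with
    | nil => intro h; exact absurd rfl h
    | cons w p1' => intro _; simpa using hpc
  have hp1c' : p1 = [] → v = c := by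
    rintro rfl; simpa using hpc
  have hpa' : (v :: p2).getLast? = some a := by
    rw [List.getLast?_append] at hpa; simpa using hpa
  have hp2a : p2 ≠ [] → p2.getLast? = some a := by
    cases p2 with
    | nil => intro h; exact absurd rfl h
    | cons w p2' =>
      intro _
      rw [List.getLast?_cons_cons] at hpa'; exact hpa'
  have hqtb : qt ≠ [] → qt.getLast? = some b := by
    cases qt with
    | nil => intro h; exact absurd rfl h
    | cons w qt' =>
      intro _
      rw [List.getLast?_cons_cons] at hqb; exact hqb
  have hqtb' : qt = [] → c = b := by rintro rfl; simpa using hqb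
  have hcq1 : ∀ w, qt.head? = some w → E c w := by
    cases qt with
    | nil => intro w h; simp at h
    | cons w' qt' =>
      intro w h
      have : w' = w := by simpa using h
      exact this ▸ (List.isChain_cons_cons.mp hq).1
  have hp1A : p1.Chain' (skeleton E).Adj :=
    chainE_adj hirr (hp.infix ⟨[], v :: p2, by simp⟩)
  have hp2A : p2.Chain' (skeleton E).Adj :=
    chainE_adj hirr (hp.infix ⟨p1 ++ [v], [], by simp⟩)
  have hqtA : qt.Chain' (skeleton E).Adj := chainE_adj hirr hq.tail
  apply connected_of_chain _ _ (p1.reverse ++ (qt ++ ([x] ++ p2.reverse)))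
  · simp
  · -- chain
    refine List.IsChain.append (chain_adj_rev hp1A)
      (List.IsChain.append hqtA
        (List.IsChain.append (by simp) (chain_adj_rev hp2A) ?_) ?_) ?_
    · -- x to p2.reverse
      intro z hz y hy
      simp only [List.getLast?_singleton, Option.mem_def, Option.some_inj] at hz
      subst hz
      rw [List.head?_reverse] at hy
      have hp2ne : p2 ≠ [] := by
        rintro rfl; simp at hy
      have hya : a = y := by
        rw [hp2a hp2ne] at hy; simpa using hy
      subst hya
      exact (adj_of_E hirr hax).symm
    · -- qt to [x]++p2.reverse
      intro z hz y hy
      have hqtne : qt ≠ [] := by rintro rfl; simp at hz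
      have hz' : b = z := by rw [hqtb hqtne] at hz; simpa using hz
      have hy' : x = y := by
        rw [List.head?_append] at hy; simpa using hy
      subst hz'; subst hy'
      exact adj_of_E hirr hbx
    · -- p1.reverse to rest
      intro z hz y hy
      rw [List.getLast?_reverse] at hz
      have hp1ne : p1 ≠ [] := by rintro rfl; simp at hz
      have hz' : c = z := by rw [hp1c hp1ne] at hz; simpa using hz
      subst hz'
      rw [List.head?_append] at hy
      cases hqt : qt with
      | nil =>
        subst hqt
        have hy' : x = y := by simpa using hy
        subst hy'
        have hcb : c = b := hqtb' rfl
        exact adj_of_E hirr (hcb ▸ hbx)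
      | cons w qt' =>
        subst hqt
        have hy' : w = y := by simpa using hy
        subst hy'
        exact adj_of_E hirr (hcq1 _ rfl)
  · -- subset
    intro y hy
    simp only [List.mem_append, List.mem_reverse, List.mem_singleton] at hy
    constructor
    · simp only [Set.mem_setOf_eq, List.mem_append, List.mem_cons]
      rcases hy with h | h | h | h
      · exact Or.inl (Or.inl h)
      · exact Or.inr (Or.inl (Or.inr h))
      · exact Or.inr (Or.inr h)
      · exact Or.inl (Or.inr (Or.inr h))
    · simp only [Set.mem_singleton_iff]
      rcases hy with h | h | h | h
      · exact fun he => hvp1 (he ▸ h)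
      · intro he
        subst he
        have hyc : y = c := hint y (by simp) (List.mem_cons_of_mem _ h)
        exact hcqt (hyc ▸ h)
      · intro he
        apply hxp
        rw [← h, he]
        exact hv
      · exact fun he => hvp2 (he ▸ h)
  · -- coverage
    rintro y ⟨hyS, hyv⟩
    simp only [Set.mem_singleton_iff] at hyv
    simp only [Set.mem_setOf_eq, List.mem_append, List.mem_cons] at hyS
    simp only [List.mem_append, List.mem_reverse, List.mem_singleton]
    rcases hyS with (h | h | h) | (h | h) | h
    · exact Or.inl h
    · exact absurd h hyv
    · exact Or.inr (Or.inr (Or.inr h))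
    · subst h
      have hp1ne : p1 ≠ [] := fun he => hyv (hp1c' he).symm
      refine Or.inl ?_
      obtain ⟨t, ht⟩ := head_eq_of_head? (hp1c hp1ne)
      rw [ht]; simp
    · exact Or.inr (Or.inl h)
    · exact Or.inr (Or.inr (Or.inl h))

lemma full_connected {E : V → V → Prop} (hirr : ∀ v, ¬ Relation.TransGen E v v)
    {p q : List V} {a b c x : V}
    (hp : p.Chain' E) (hq : q.Chain' E)
    (hpc : p.head? = some c) (hqc : q.head? = some c)
    (hpa : p.getLast? = some a) (hqb : q.getLast? = some b)
    (hax : E a x) (hbx : E b x) :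
    ((skeleton E).induce {y | y ∈ p ∨ y ∈ q ∨ y = x}).Connected := by
  obtain ⟨qt, rfl⟩ := head_eq_of_head? hqc
  have hqtb : qt ≠ [] → qt.getLast? = some b := by
    cases qt with
    | nil => intro h; exact absurd rfl h
    | cons w qt' => intro _; rw [List.getLast?_cons_cons] at hqb; exact hqb
  have hqtb' : qt = [] → c = b := by rintro rfl; simpa using hqb
  have hcp : c ∈ p := by
    obtain ⟨t, ht⟩ := head_eq_of_head? hpc
    rw [ht]; simp
  apply connected_of_chain _ _ (p ++ ([x] ++ qt.reverse))
  · cases p <;> simp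
  · refine List.IsChain.append (chainE_adj hirr hp)
      (List.IsChain.append (by simp) (chain_adj_rev (chainE_adj hirr hq.tail)) ?_) ?_
    · intro z hz y hy
      simp only [List.getLast?_singleton, Option.mem_def, Option.some_inj] at hz
      subst hz
      rw [List.head?_reverse] at hy
      have hqtne : qt ≠ [] := by rintro rfl; simp at hy
      have hyb : b = y := by rw [hqtb hqtne] at hy; simpa using hy
      subst hyb
      exact (adj_of_E hirr hbx).symm
    · intro z hz y hy
      have hz' : a = z := by rw [hpa] at hz; simpa using hz
      have hy' : x = y := by rw [List.head?_append] at hy; simpa using hy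
      subst hz'; subst hy'
      exact adj_of_E hirr hax
  · intro y hy
    simp only [List.mem_append, List.mem_reverse, List.mem_singleton] at hy
    simp only [Set.mem_setOf_eq, List.mem_cons]
    rcases hy with h | h | h
    · exact Or.inl h
    · exact Or.inr (Or.inr h)
    · exact Or.inr (Or.inl (Or.inr h))
  · intro y hy
    simp only [Set.mem_setOf_eq, List.mem_cons] at hy
    simp only [List.mem_append, List.mem_reverse, List.mem_singleton]
    rcases hy with h | (h | h) | h
    · exact Or.inl h
    · exact Or.inl (h ▸ hcp)
    · exact Or.inr (Or.inr h)
    · exact Or.inr (Or.inl h)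

lemma xremove_connected {E : V → V → Prop} (hirr : ∀ v, ¬ Relation.TransGen E v v)
    {p q : List V} {c x : V}
    (hp : p.Chain' E) (hq : q.Chain' E)
    (hpc : p.head? = some c) (hqc : q.head? = some c)
    (hxp : x ∉ p) (hxq : x ∉ q) :
    ((skeleton E).induce ({y | y ∈ p ∨ y ∈ q ∨ y = x} \ {x})).Connected := by
  obtain ⟨qt, rfl⟩ := head_eq_of_head? hqc
  have hcq1 : ∀ w, qt.head? = some w → E c w := by
    cases qt with
    | nil => intro w h; simp at h
    | cons w' qt' =>
      intro w h
      have : w' = w := by simpa using h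
      exact this ▸ (List.isChain_cons_cons.mp hq).1
  have hcp : c ∈ p := by
    obtain ⟨t, ht⟩ := head_eq_of_head? hpc
    rw [ht]; simp
  apply connected_of_chain _ _ (p.reverse ++ qt)
  · have : p ≠ [] := by rintro rfl; simp at hpc
    cases p with
    | nil => exact absurd rfl this
    | cons w p' => simp
  · refine List.IsChain.append (chain_adj_rev (chainE_adj hirr hp))
      (chainE_adj hirr hq.tail) ?_
    intro z hz y hy
    rw [List.getLast?_reverse, hpc] at hz
    have hz' : c = z := by simpa using hz
    subst hz'
    exact adj_of_E hirr (hcq1 _ hy)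
  · intro y hy
    simp only [List.mem_append, List.mem_reverse] at hy
    constructor
    · simp only [Set.mem_setOf_eq, List.mem_cons]
      rcases hy with h | h
      · exact Or.inl h
      · exact Or.inr (Or.inl (Or.inr h))
    · simp only [Set.mem_singleton_iff]
      rcases hy with h | h
      · exact fun he => hxp (he ▸ h)
      · exact fun he => hxq (he ▸ List.mem_cons_of_mem _ h)
  · rintro y ⟨hyS, hyx⟩
    simp only [Set.mem_singleton_iff] at hyx
    simp only [Set.mem_setOf_eq, List.mem_cons] at hyS
    simp only [List.mem_append, List.mem_reverse]
    rcases hyS with h | (h | h) | h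
    · exact Or.inl h
    · exact Or.inl (h ▸ hcp)
    · exact Or.inr h
    · exact absurd h hyx

lemma getLast?_right {l1 l2 : List V} {a : V} (h : (l1 ++ l2).getLast? = some a)
    (hne : l2 ≠ []) : l2.getLast? = some a := by
  rw [List.getLast?_append, List.getLast?_eq_getLast hne] at h
  rw [List.getLast?_eq_getLast hne]
  simpa using h

lemma exists_min_pair {E : V → V → Prop} {s a b : V}
    (hsa : ∃ l : List V, l.Chain' E ∧ l.head? = some s ∧ l.getLast? = some a)
    (hsb : ∃ l : List V, l.Chain' E ∧ l.head? = some s ∧ l.getLast? = some b) :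
    ∃ (c : V) (p q : List V), p.Chain' E ∧ q.Chain' E ∧ p.head? = some c ∧
      q.head? = some c ∧ p.getLast? = some a ∧ q.getLast? = some b ∧
      ∀ y, y ∈ p → y ∈ q → y = c := by
  obtain ⟨p0, hp0⟩ := hsa
  obtain ⟨q0, hq0⟩ := hsb
  have hex : ∃ n, ∃ p q : List V, (p.Chain' E ∧ q.Chain' E ∧ p.head? = q.head? ∧
      p.getLast? = some a ∧ q.getLast? = some b) ∧ p.length + q.length = n :=
    ⟨_, p0, q0, ⟨hp0.1, hq0.1, by rw [hp0.2.1, hq0.2.1], hp0.2.2, hq0.2.2⟩, rfl⟩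
  obtain ⟨p, q, ⟨hp, hq, hpq, hpa, hqb⟩, hlen⟩ := Nat.find_spec hex
  have hpne : p ≠ [] := by rintro rfl; simp at hpa
  obtain ⟨c, hpc⟩ : ∃ c, p.head? = some c := by
    cases p with
    | nil => exact absurd rfl hpne
    | cons w l => exact ⟨w, rfl⟩
  have hqc : q.head? = some c := by rw [← hpq, hpc]
  refine ⟨c, p, q, hp, hq, hpc, hqc, hpa, hqb, ?_⟩
  intro y hyp hyq
  by_contra hyc
  obtain ⟨p1, p2, hpdec⟩ := List.append_of_mem hyp
  obtain ⟨q1, q2, hqdec⟩ := List.append_of_mem hyq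
  have hp1ne : p1 ≠ [] := by
    rintro rfl
    apply hyc
    rw [hpdec] at hpc
    simpa using hpc
  have hlt : (y :: p2).length + (y :: q2).length < Nat.find hex := by
    rw [← hlen, hpdec, hqdec]
    simp only [List.length_append, List.length_cons]
    have h1 : 0 < p1.length := List.length_pos_iff.mpr hp1ne
    omega
  apply Nat.find_min hex hlt
  refine ⟨y :: p2, y :: q2, ⟨?_, ?_, by simp, ?_, ?_⟩, rfl⟩
  · exact hp.infix (by rw [hpdec]; exact ⟨p1, [], by simp⟩)
  · exact hq.infix (by rw [hqdec]; exact ⟨q1, [], by simp⟩)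
  · exact getLast?_right (hpdec ▸ hpa) (by simp)
  · exact getLast?_right (hqdec ▸ hqb) (by simp)

lemma parents_adj {E : V → V → Prop} [Fintype V]
    (hirr : ∀ v, ¬ Relation.TransGen E v v)
    (hblock : IsBlockGraph (skeleton E)) (hsrc : ∃! u : V, ∀ w, ¬ E w u)
    {a b x : V} (hab : a ≠ b) (hax : E a x) (hbx : E b x) : E a b ∨ E b a := by
  obtain ⟨s, hs, huniq⟩ := hsrc
  have hreach := reaches_from_source hirr (fun v hv => huniq v hv)
  obtain ⟨c, p, q, hp, hq, hpc, hqc, hpa, hqb, hint⟩ :=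
    exists_min_pair (hreach a) (hreach b)
  have hxp : x ∉ p := by
    intro hx
    rcases chain'_to_getLast hp hx hpa with rfl | h
    · exact hirr x (Relation.TransGen.single hax)
    · exact hirr x ((h.trans (Relation.TransGen.single hax)))
  have hxq : x ∉ q := by
    intro hx
    rcases chain'_to_getLast hq hx hqb with rfl | h
    · exact hirr x (Relation.TransGen.single hbx)
    · exact hirr x ((h.trans (Relation.TransGen.single hbx)))
  set S : Set V := {y | y ∈ p ∨ y ∈ q ∨ y = x} with hSdef
  have hbi : IsBiconnected (skeleton E) S := by
    constructor
    · exact full_connected hirr hp hq hpc hqc hpa hqb hax hbx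
    · intro v hv
      rcases hv with hvp | hvq | rfl
      · exact remove_connected hirr hp hq hpc hqc hpa hqb hax hbx hxp hxq hint hvp
      · have hSeq : {y | y ∈ q ∨ y ∈ p ∨ y = x} = S := by
          ext y; simp only [hSdef, Set.mem_setOf_eq]; tauto
        have := remove_connected hirr hq hp hqc hpc hqb hpa hbx hax hxq hxp
          (fun y h1 h2 => hint y h2 h1) hvq
        rwa [hSeq] at this
      · exact xremove_connected hirr hp hq hpc hqc hxp hxq
  have hfam : {T : Set V | S ⊆ T ∧ IsBiconnected (skeleton E) T}.Finite :=
    Set.toFinite _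
  obtain ⟨T, ⟨hST, hTbi⟩, hTmax⟩ :=
    Set.Finite.exists_maximalFor id _ hfam ⟨S, subset_refl S, hbi⟩
  have hclique : (skeleton E).IsClique T := by
    refine hblock T hTbi ?_
    intro T' hTT' hT'bi
    exact hTT'.antisymm (hTmax ⟨hST.trans hTT', hT'bi⟩ hTT')
  have haT : a ∈ T := hST (Or.inl (mem_of_getLast?' hpa))
  have hbT : b ∈ T := hST (Or.inr (Or.inl (mem_of_getLast?' hqb)))
  exact (hclique haT hbT hab).2

lemma not_nodup_decomp : ∀ {l : List V}, ¬ l.Nodup →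
    ∃ (x : V) (l1 l2 l3 : List V), l = l1 ++ x :: l2 ++ x :: l3 := by
  intro l
  induction l with
  | nil => intro h; exact absurd List.nodup_nil h
  | cons y l ih =>
    intro h
    by_cases hy : y ∈ l
    · obtain ⟨l2, l3, rfl⟩ := List.append_of_mem hy
      exact ⟨y, [], l2, l3, by simp⟩
    · have : ¬ l.Nodup := fun hn => h (List.nodup_cons.mpr ⟨hy, hn⟩)
      obtain ⟨x, l1, l2, l3, rfl⟩ := ih this
      exact ⟨x, y :: l1, l2, l3, by simp⟩

lemma chain_forced {E : V → V → Prop} :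
    ∀ (l : List V) (x : V), (x :: l).Chain' (fun a b => E a b ∨ E b a) →
      (∀ a z b, [a, z, b] <:+: (x :: l) → ¬(E a z ∧ E b z)) →
      (∀ w, l.head? = some w → E x w) → (x :: l).Chain' E := by
  intro l
  induction l with
  | nil => intro x _ _ _; exact List.isChain_singleton _
  | cons w l' ih =>
    intro x h hnv hE
    have hxw : E x w := hE w rfl
    refine List.isChain_cons_cons.mpr ⟨hxw, ?_⟩
    refine ih w (List.isChain_cons_cons.mp h).2 ?_ ?_
    · intro a z b hinf
      exact hnv a z b (hinf.trans ⟨[x], [], by simp⟩)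
    · intro z hz
      obtain ⟨l'', rfl⟩ := head_eq_of_head? hz
      rcases (List.isChain_cons_cons.mp (List.isChain_cons_cons.mp h).2).1 with hwz | hzw
      · exact hwz
      · exact absurd ⟨hxw, hzw⟩ (hnv x w z ⟨[], l'', by simp⟩)

lemma shape_lemma {E : V → V → Prop} :
    ∀ (l : List V), l.Chain' (fun a b => E a b ∨ E b a) →
      (∀ a z b, [a, z, b] <:+: l → ¬(E a z ∧ E b z)) →
      l.Chain' E ∨ l.Chain' (fun a b => E b a) ∨
        ∃ (w : V) (l1 l2 : List V), l = l1 ++ w :: l2 ∧ l1 ≠ [] ∧ l2 ≠ [] ∧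
          (l1 ++ [w]).Chain' (fun a b => E b a) ∧ (w :: l2).Chain' E := by
  intro l
  induction l with
  | nil => intro _ _; exact Or.inl List.isChain_nil
  | cons x l ih =>
    intro h hnv
    cases l with
    | nil => exact Or.inl (List.isChain_singleton _)
    | cons y rest =>
      by_cases hxy : E x y
      · refine Or.inl (chain_forced _ x h hnv ?_)
        intro w hw
        have hyw : y = w := by simpa using hw
        exact hyw ▸ hxy
      · have hyx : E y x := by
          rcases (List.isChain_cons_cons.mp h).1 with h1 | h1
          · exact absurd h1 hxy
          · exact h1
        have htail := (List.isChain_cons_cons.mp h).2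
        have hnv' : ∀ a z b, [a, z, b] <:+: (y :: rest) → ¬(E a z ∧ E b z) :=
          fun a z b hinf => hnv a z b (hinf.trans ⟨[x], [], by simp⟩)
        rcases ih htail hnv' with hE | hB | ⟨w, l1, l2, heq, hne1, hne2, hc1, hc2⟩
        · cases rest with
          | nil => exact Or.inr (Or.inl (by simp [List.Chain', hyx]))
          | cons z rest' =>
            refine Or.inr (Or.inr ⟨y, [x], z :: rest', rfl, by simp, by simp, ?_, hE⟩)
            simp [List.Chain', hyx]
        · exact Or.inr (Or.inl (List.isChain_cons_cons.mpr ⟨hyx, hB⟩))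
        · refine Or.inr (Or.inr ⟨w, x :: l1, l2, by rw [heq]; rfl, by simp, hne2, ?_, hc2⟩)
          have hheadl1 : l1.head? = some y := by
            cases l1 with
            | nil => exact absurd rfl hne1
            | cons y' l1' =>
              have : y' = y := by
                have := congrArg List.head? heq
                simpa using this.symm
              rw [this]; rfl
          refine List.isChain_cons.mpr ⟨?_, hc1⟩
          obtain ⟨l1', rfl⟩ := head_eq_of_head? hheadl1
          intro z hz
          have hyz : y = z := by simpa using hz
          subst hyz
          exact hyx

/-- In a ttt with unique source, the unique shortest trail between two distinct
nodes `u, v` is a directed path from `u` to `v`, or a directed path from `v` to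
`u`, or the concatenation of two directed paths issuing from a common node `w`
distinct from `u` and `v`. -/
theorem stmt10 {V : Type u} [Fintype V] (E : V → V → Prop)
    (httt : IsTTT E) (hsrc : ∃! u : V, ∀ w, ¬ E w u)
    (u v : V) (huv : u ≠ v) (t : List V)
    (ht : IsDirSeq (fun a b => E a b ∨ E b a) u v t)
    (hmin : ∀ t' : List V, IsDirSeq (fun a b => E a b ∨ E b a) u v t' →
      t.length ≤ t'.length) :
    t.Chain' E ∨ t.Chain' (fun a b => E b a) ∨
      ∃ (w : V) (l1 l2 : List V), t = l1 ++ w :: l2 ∧ w ≠ u ∧ w ≠ v ∧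
        (l1 ++ [w]).Chain' (fun a b => E b a) ∧ (w :: l2).Chain' E := by
  obtain ⟨hirr, hconn, hblock⟩ := httt
  obtain ⟨hchain, hhead, hlast⟩ := ht
  -- t has no duplicates
  have hnd : t.Nodup := by
    by_contra hnd
    obtain ⟨x, l1, l2, l3, heq⟩ := not_nodup_decomp hnd
    have heq' : t = (l1 ++ x :: l2) ++ (x :: l3) := by rw [heq]
    have hds : IsDirSeq (fun a b => E a b ∨ E b a) u v (l1 ++ x :: l3) := by
      refine ⟨?_, ?_, ?_⟩
      · refine List.IsChain.append ?_ ?_ ?_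
        · exact hchain.infix (by rw [heq]; exact ⟨[], x :: l2 ++ x :: l3, by simp⟩)
        · exact hchain.infix (by rw [heq]; exact ⟨l1 ++ x :: l2, [], by simp⟩)
        · intro z hz y hy
          have hy' : x = y := by simpa using hy
          subst hy'
          have hc : (l1 ++ [x]).Chain' (fun a b => E a b ∨ E b a) :=
            hchain.infix (by rw [heq]; exact ⟨[], l2 ++ x :: l3, by simp⟩)
          rcases List.isChain_append.mp hc with ⟨_, _, hlink⟩
          exact hlink z hz x rfl
      · rw [heq] at hhead
        cases l1 with
        | nil => simpa using hhead
        | cons a l1' => simpa using hhead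
      · have hv' : (x :: l3).getLast? = some v :=
          getLast?_right (heq' ▸ hlast) (by simp)
        rw [List.getLast?_append, hv']
        simp
    have hle := hmin _ hds
    rw [heq] at hle
    simp only [List.length_append, List.length_cons] at hle
    omega
  -- no valley
  have hnv : ∀ a z b, [a, z, b] <:+: t → ¬(E a z ∧ E b z) := by
    rintro a z b hinf ⟨haz, hbz⟩
    have hab : a ≠ b := by
      have h3 : ([a, z, b] : List V).Nodup := hnd.sublist hinf.sublist
      simp only [List.nodup_cons, List.mem_cons] at h3
      intro he; exact h3.1 (Or.inr (Or.inl he))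
    have hadj : ¬(E a b ∨ E b a) := by
      intro hor
      obtain ⟨r1, r2, heq0⟩ := hinf
      have heq : t = r1 ++ [a, z, b] ++ r2 := heq0.symm
      have hds : IsDirSeq (fun a' b' => E a' b' ∨ E b' a') u v (r1 ++ a :: b :: r2) := by
        refine ⟨?_, ?_, ?_⟩
        · have h1 : (r1 ++ [a]).Chain' (fun a' b' => E a' b' ∨ E b' a') :=
            hchain.infix (by rw [heq]; exact ⟨[], [z, b] ++ r2, by simp⟩)
          have h2 : (b :: r2).Chain' (fun a' b' => E a' b' ∨ E b' a') :=
            hchain.infix (by rw [heq]; exact ⟨r1 ++ [a, z], [], by simp⟩)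
          have : (r1 ++ [a]) ++ (b :: r2) = r1 ++ a :: b :: r2 := by simp
          rw [← this]
          refine List.IsChain.append h1 h2 ?_
          intro z' hz' y hy
          have hz'' : a = z' := by
            rw [List.getLast?_concat] at hz'
            simpa using hz'
          have hy' : b = y := by simpa using hy
          subst hz''; subst hy'
          exact hor
        · rw [heq] at hhead
          cases r1 with
          | nil => simpa using hhead
          | cons a' r1' => simpa using hhead
        · have heq2 : t = (r1 ++ [a, z]) ++ (b :: r2) := by rw [heq]; simp
          have hv' : (b :: r2).getLast? = some v :=
            getLast?_right (heq2 ▸ hlast) (by simp)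
          have : r1 ++ a :: b :: r2 = (r1 ++ [a]) ++ (b :: r2) := by simp
          rw [this, List.getLast?_append, hv']
          simp
      have hle := hmin _ hds
      rw [heq] at hle
      simp only [List.length_append, List.length_cons] at hle
      omega
    exact hadj (parents_adj hirr hblock hsrc hab haz hbz)
  rcases shape_lemma t hchain hnv with hE | hB | ⟨w, l1, l2, heq, hne1, hne2, hc1, hc2⟩
  · exact Or.inl hE
  · exact Or.inr (Or.inl hB)
  · refine Or.inr (Or.inr ⟨w, l1, l2, heq, ?_, ?_, hc1, hc2⟩)
    · -- w ≠ u
      rw [heq] at hhead hnd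
      have hul1 : u ∈ l1 := by
        cases l1 with
        | nil => exact absurd rfl hne1
        | cons a l1' =>
          have : a = u := by simpa using hhead
          rw [← this]; simp
      rcases List.nodup_append'.mp hnd with ⟨_, _, hd⟩
      intro hwu
      exact hd (hwu ▸ hul1) (by simp)
    · -- w ≠ v
      rw [heq] at hlast hnd
      have heq2 : l1 ++ w :: l2 = (l1 ++ [w]) ++ l2 := by simp
      have hvl2 : v ∈ l2 := by
        rw [heq2] at hlast
        exact mem_of_getLast?' (getLast?_right hlast hne2)
      rcases List.nodup_append'.mp hnd with ⟨_, h2, _⟩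
      intro hwv
      exact (List.nodup_cons.mp h2).1 (hwv ▸ hvl2)
end

section
/- In a block graph (a connected undirected graph each of whose maximal biconnected subgraphs is a complete graph), between every pair of distinct vertices there is a unique shortest path. -/
open scoped Classical

universe u

variable {V : Type u}

section Helpers

open SimpleGraph

variable {G : SimpleGraph V}

/-- A walk whose support lies in `S` gives reachability in the induced graph. -/
private lemma reach_induce {S : Set V} : ∀ {a b : V} (r : G.Walk a b),
    (∀ z ∈ r.support, z ∈ S) → ∀ (ha : a ∈ S) (hb : b ∈ S),
    (G.induce S).Reachable ⟨a, ha⟩ ⟨b, hb⟩ := by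
  intro a b r
  induction r with
  | nil => intro _ ha hb; exact Reachable.refl _
  | @cons a c b h r ih =>
    intro hsup ha hb
    have hc : c ∈ S := hsup c (by simp)
    have hadj : (G.induce S).Adj ⟨a, ha⟩ ⟨c, hc⟩ := h
    exact hadj.reachable.trans (ih (fun z hz => hsup z (by simp [hz])) hc hb)

/-- On a path, a vertex can't be in both the take-part and the drop-part unless
it is the split vertex. -/
private lemma eq_of_mem_take_drop {a b x y : V} {r : G.Walk a b} (hr : r.IsPath)
    (hy : y ∈ r.support) (h1 : x ∈ (r.takeUntil y hy).support)
    (h2 : x ∈ (r.dropUntil y hy).support) : x = y := by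
  by_contra hxy
  have hsup : r.support = (r.takeUntil y hy).support ++ (r.dropUntil y hy).support.tail := by
    conv_lhs => rw [← r.take_spec hy]
    exact Walk.support_append _ _
  have hnd := hr.support_nodup
  rw [hsup] at hnd
  have hdisj := List.disjoint_of_nodup_append hnd
  have h2' : x ∈ (r.dropUntil y hy).support.tail := by
    have hc := Walk.support_eq_cons (r.dropUntil y hy)
    rw [hc] at h2
    rcases List.mem_cons.mp h2 with h | h
    · exact absurd h hxy
    · exact h
  exact hdisj h1 h2'

/-- Every biconnected set extends to a maximal biconnected set. -/
private lemma exists_maximal_bicon [Fintype V] {S : Set V} (hS : IsBiconnected G S) :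
    ∃ M, S ⊆ M ∧ IsBiconnected G M ∧ ∀ M', M ⊆ M' → IsBiconnected G M' → M = M' := by
  have hfin : ({T : Set V | S ⊆ T ∧ IsBiconnected G T}).Finite := Set.toFinite _
  obtain ⟨M, hM, hmax⟩ := Set.Finite.exists_maximalFor (fun T => T.ncard) _ hfin
    ⟨S, subset_rfl, hS⟩
  refine ⟨M, hM.1, hM.2, fun M' hsub hbi => ?_⟩
  have hmem : M' ∈ {T : Set V | S ⊆ T ∧ IsBiconnected G T} := ⟨hM.1.trans hsub, hbi⟩
  have hle : M.ncard ≤ M'.ncard := Set.ncard_le_ncard hsub (Set.toFinite _)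
  have heq := hmax hmem hle
  exact Set.eq_of_subset_of_ncard_le hsub heq (Set.toFinite _)

/-- Walks of length one between given endpoints are unique. -/
private lemma walk_length_one_unique {u v : V} (p q : G.Walk u v)
    (hp : p.length = 1) (hq : q.length = 1) : p = q := by
  cases p with
  | nil => simp at hp
  | cons h p' =>
    cases p' with
    | cons h2 p'' => simp at hp
    | nil =>
      cases q with
      | nil => simp at hq
      | cons h2 q' =>
        cases q' with
        | cons h3 q'' => simp at hq
        | nil => rfl

/-- Removing the start vertex from the union of supports of two `u`–`v` paths
leaves a connected induced graph. -/
private lemma conn_remove_first {u v : V} (huv : u ≠ v) (p q : G.Walk u v)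
    (hp : p.IsPath) (hq : q.IsPath) :
    (G.induce (({z | z ∈ p.support ∨ z ∈ q.support} : Set V) \ {u})).Connected := by
  set S : Set V := {z | z ∈ p.support ∨ z ∈ q.support} with hSdef
  have hvS : v ∈ S \ {u} := ⟨Or.inl p.end_mem_support, fun h => huv (h : v = u).symm⟩
  have aux : ∀ (r : G.Walk u v), r.IsPath → (∀ z ∈ r.support, z ∈ S) →
      ∀ z (hzr : z ∈ r.support) (hz : z ∈ S \ {u}),
      (G.induce (S \ {u})).Reachable ⟨z, hz⟩ ⟨v, hvS⟩ := by
    intro r hr hrS z hzr hz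
    cases r with
    | nil => exact absurd rfl huv
    | @cons _ c _ h r1 =>
      rw [Walk.cons_isPath_iff] at hr
      have hz1 : z ∈ r1.support := by
        rcases List.mem_cons.mp (by simpa using hzr) with h' | h'
        · exact absurd h' (fun hh => hz.2 hh)
        · exact h'
      have hsub : ∀ w ∈ (r1.dropUntil z hz1).support, w ∈ S \ {u} := by
        intro w hw
        have hw1 : w ∈ r1.support := r1.support_dropUntil_subset hz1 hw
        exact ⟨hrS w (by simp [hw1]), fun hh => hr.2 ((hh : w = u) ▸ hw1)⟩
      exact reach_induce (r1.dropUntil z hz1) hsub hz hvS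
  refine (SimpleGraph.connected_iff _).mpr ⟨?_, ⟨⟨v, hvS⟩⟩⟩
  rintro ⟨a, ha⟩ ⟨b, hb⟩
  have key : ∀ z (hz : z ∈ S \ {u}),
      (G.induce (S \ {u})).Reachable ⟨z, hz⟩ ⟨v, hvS⟩ := by
    intro z hz
    rcases hz.1 with hzp | hzq
    · exact aux p hp (fun w hw => Or.inl hw) z hzp hz
    · exact aux q hq (fun w hw => Or.inr hw) z hzq hz
  exact (key a ha).trans (key b hb).symm

/-- Removing an internal vertex of `p` (not on `q`) from the union of supports
leaves a connected induced graph. -/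
private lemma conn_remove_internal {u v x : V} (p q : G.Walk u v)
    (hp : p.IsPath) (hq : q.IsPath)
    (hxp : x ∈ p.support) (hxq : x ∉ q.support) (hxu : x ≠ u) (hxv : x ≠ v) :
    (G.induce (({z | z ∈ p.support ∨ z ∈ q.support} : Set V) \ {x})).Connected := by
  set S : Set V := {z | z ∈ p.support ∨ z ∈ q.support} with hSdef
  have huS : u ∈ S \ {x} := ⟨Or.inl p.start_mem_support, fun h => hxu (h : u = x).symm⟩
  have hvS : v ∈ S \ {x} := ⟨Or.inl p.end_mem_support, fun h => hxv (h : v = x).symm⟩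
  have hqsub : ∀ w ∈ q.support, w ∈ S \ {x} := by
    intro w hw
    exact ⟨Or.inr hw, fun hh => hxq ((hh : w = x) ▸ hw)⟩
  have huvreach : (G.induce (S \ {x})).Reachable ⟨u, huS⟩ ⟨v, hvS⟩ :=
    reach_induce q hqsub huS hvS
  set T := p.takeUntil x hxp with hTdef
  set D := p.dropUntil x hxp with hDdef
  have hT : T.IsPath := hp.takeUntil hxp
  have hD : D.IsPath := hp.dropUntil hxp
  have hcover : ∀ z ∈ p.support, z ∈ T.support ∨ z ∈ D.support := by
    intro z hz
    rw [← p.take_spec hxp, Walk.mem_support_append_iff] at hz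
    exact hz
  have key : ∀ z (hz : z ∈ S \ {x}),
      (G.induce (S \ {x})).Reachable ⟨z, hz⟩ ⟨u, huS⟩ ∨
      (G.induce (S \ {x})).Reachable ⟨z, hz⟩ ⟨v, hvS⟩ := by
    intro z hz
    have hzx : z ≠ x := fun h => hz.2 h
    rcases hz.1 with hzp | hzq
    · rcases hcover z hzp with hzT | hzD
      · left
        have hxe : x ∉ (T.takeUntil z hzT).support := by
          intro hmem
          exact hzx (eq_of_mem_take_drop hT hzT hmem (Walk.end_mem_support _)).symm
        have hsub : ∀ w ∈ (T.takeUntil z hzT).support, w ∈ S \ {x} := by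
          intro w hw
          have : w ∈ p.support :=
            p.support_takeUntil_subset hxp (T.support_takeUntil_subset hzT hw)
          exact ⟨Or.inl this, fun hh => hxe ((hh : w = x) ▸ hw)⟩
        exact (reach_induce (T.takeUntil z hzT) hsub huS hz).symm
      · right
        have hxe : x ∉ (D.dropUntil z hzD).support := by
          intro hmem
          exact hzx (eq_of_mem_take_drop hD hzD (Walk.start_mem_support _) hmem).symm
        have hsub : ∀ w ∈ (D.dropUntil z hzD).support, w ∈ S \ {x} := by
          intro w hw
          have : w ∈ p.support :=
            p.support_dropUntil_subset hxp (D.support_dropUntil_subset hzD hw)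
          exact ⟨Or.inl this, fun hh => hxe ((hh : w = x) ▸ hw)⟩
        exact (reach_induce (D.dropUntil z hzD) hsub hz hvS)
    · left
      have hsub : ∀ w ∈ (q.takeUntil z hzq).support, w ∈ S \ {x} :=
        fun w hw => hqsub w (q.support_takeUntil_subset hzq hw)
      exact (reach_induce (q.takeUntil z hzq) hsub huS hz).symm
  refine (SimpleGraph.connected_iff _).mpr ⟨?_, ⟨⟨u, huS⟩⟩⟩
  rintro ⟨a, ha⟩ ⟨b, hb⟩
  rcases key a ha with h1 | h1 <;> rcases key b hb with h2 | h2
  · exact h1.trans h2.symm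
  · exact (h1.trans huvreach).trans h2.symm
  · exact (h1.trans huvreach.symm).trans h2.symm
  · exact h1.trans h2.symm

/-- The union of supports of two internally disjoint `u`–`v` paths is biconnected. -/
private lemma bicon_of_two_paths {u v : V} (huv : u ≠ v) (p q : G.Walk u v)
    (hp : p.IsPath) (hq : q.IsPath)
    (hdisj : ∀ w, w ∈ p.support → w ∈ q.support → w = u ∨ w = v) :
    IsBiconnected G ({z | z ∈ p.support ∨ z ∈ q.support} : Set V) := by
  set S : Set V := {z | z ∈ p.support ∨ z ∈ q.support} with hSdef
  have huS : u ∈ S := Or.inl p.start_mem_support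
  constructor
  · -- connectedness of S
    refine (SimpleGraph.connected_iff _).mpr ⟨?_, ⟨⟨u, huS⟩⟩⟩
    have key : ∀ z (hz : z ∈ S), (G.induce S).Reachable ⟨z, hz⟩ ⟨u, huS⟩ := by
      intro z hz
      rcases id hz with hzp | hzq
      · exact (reach_induce (p.takeUntil z hzp)
          (fun w hw => Or.inl (p.support_takeUntil_subset hzp hw)) huS hz).symm
      · exact (reach_induce (q.takeUntil z hzq)
          (fun w hw => Or.inr (q.support_takeUntil_subset hzq hw)) huS hz).symm
    rintro ⟨a, ha⟩ ⟨b, hb⟩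
    exact (key a ha).trans (key b hb).symm
  · intro x hx
    by_cases hxu : x = u
    · subst hxu
      exact conn_remove_first huv p q hp hq
    · by_cases hxv : x = v
      · subst hxv
        have hset : (({z | z ∈ p.reverse.support ∨ z ∈ q.reverse.support} : Set V) \ {x})
            = S \ {x} := by
          ext z
          simp [Walk.support_reverse, List.mem_reverse, hSdef]
        have := conn_remove_first (fun h => huv h.symm) p.reverse q.reverse
          hp.reverse hq.reverse
        rwa [hset] at this
      · rcases hx with hxp | hxq
        · have hxq : x ∉ q.support := by
            intro h
            rcases hdisj x hxp h with h' | h' <;> [exact hxu h'; exact hxv h']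
          exact conn_remove_internal p q hp hq hxp hxq hxu hxv
        · have hxp : x ∉ p.support := by
            intro h
            rcases hdisj x h hxq with h' | h' <;> [exact hxu h'; exact hxv h']
          have hset : (({z | z ∈ q.support ∨ z ∈ p.support} : Set V) \ {x}) = S \ {x} := by
            ext z
            simp only [hSdef, Set.mem_diff, Set.mem_setOf_eq]
            tauto
          have := conn_remove_internal q p hq hp hxq hxp hxu hxv
          rwa [hset] at this

/-- Key lemma: shortest paths are unique, by strong induction on length. -/
private lemma shortest_unique [Fintype V] {G : SimpleGraph V} (hconn : G.Connected)
    (hbg : IsBlockGraph G) :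
    ∀ (n : ℕ) {u v : V}, u ≠ v → ∀ (p q : G.Walk u v), p.IsPath → q.IsPath →
      p.length = G.dist u v → q.length = G.dist u v → p.length = n → p = q := by
  intro n
  induction n using Nat.strong_induction_on with
  | _ n IH =>
  intro u v huv p q hp hq hpd hqd hlen
  have hd1 : 1 ≤ G.dist u v := hconn.pos_dist_of_ne huv
  rcases Nat.lt_or_ge (G.dist u v) 2 with hd | hd
  · -- distance one
    exact walk_length_one_unique p q (by omega) (by omega)
  · by_cases hshared : ∃ w, w ∈ p.support ∧ w ∈ q.support ∧ w ≠ u ∧ w ≠ v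
    · obtain ⟨w, hwp, hwq, hwu, hwv⟩ := hshared
      have huw : u ≠ w := fun h => hwu h.symm
      have hwv' : w ≠ v := hwv
      have hduw : 1 ≤ G.dist u w := hconn.pos_dist_of_ne huw
      have hdwv : 1 ≤ G.dist w v := hconn.pos_dist_of_ne hwv'
      have htri : G.dist u v ≤ G.dist u w + G.dist w v := hconn.dist_triangle
      -- lengths of the pieces
      have hsplit1 : (p.takeUntil w hwp).length + (p.dropUntil w hwp).length = p.length := by
        have := congrArg Walk.length (p.take_spec hwp)
        rwa [Walk.length_append] at this
      have hsplit2 : (q.takeUntil w hwq).length + (q.dropUntil w hwq).length = q.length := by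
        have := congrArg Walk.length (q.take_spec hwq)
        rwa [Walk.length_append] at this
      have hb1 : G.dist u w ≤ (p.takeUntil w hwp).length := SimpleGraph.dist_le _
      have hb2 : G.dist w v ≤ (p.dropUntil w hwp).length := SimpleGraph.dist_le _
      have hb3 : G.dist u w ≤ (q.takeUntil w hwq).length := SimpleGraph.dist_le _
      have hb4 : G.dist w v ≤ (q.dropUntil w hwq).length := SimpleGraph.dist_le _
      have e1 : (p.takeUntil w hwp).length = G.dist u w := by omega
      have e2 : (p.dropUntil w hwp).length = G.dist w v := by omega
      have e3 : (q.takeUntil w hwq).length = G.dist u w := by omega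
      have e4 : (q.dropUntil w hwq).length = G.dist w v := by omega
      have h1 : p.takeUntil w hwp = q.takeUntil w hwq :=
        IH (G.dist u w) (by omega) huw _ _ (hp.takeUntil hwp) (hq.takeUntil hwq) e1 e3 e1
      have h2 : p.dropUntil w hwp = q.dropUntil w hwq :=
        IH (G.dist w v) (by omega) hwv' _ _ (hp.dropUntil hwp) (hq.dropUntil hwq) e2 e4 e2
      rw [← p.take_spec hwp, ← q.take_spec hwq, h1, h2]
    · -- internally disjoint: derive adjacency, contradiction with distance ≥ 2
      exfalso
      have hdisj : ∀ w, w ∈ p.support → w ∈ q.support → w = u ∨ w = v := by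
        intro w h1 h2
        by_contra hc
        push_neg at hc
        exact hshared ⟨w, h1, h2, hc.1, hc.2⟩
      have hbi := bicon_of_two_paths huv p q hp hq hdisj
      obtain ⟨M, hsub, hbiM, hmax⟩ := exists_maximal_bicon hbi
      have hclique := hbg M hbiM hmax
      have hadj : G.Adj u v :=
        hclique (hsub (Or.inl p.start_mem_support)) (hsub (Or.inl p.end_mem_support)) huv
      have : G.dist u v = 1 := SimpleGraph.dist_eq_one_iff_adj.mpr hadj
      omega

end Helpers

/-- In a block graph, between every pair of distinct vertices there is a unique
shortest path. -/
theorem stmt11 {V : Type u} [Fintype V] (G : SimpleGraph V)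
    (hconn : G.Connected) (hbg : IsBlockGraph G) :
    ∀ u v : V, u ≠ v →
      ∃! p : G.Walk u v, p.IsPath ∧
        ∀ q : G.Walk u v, q.IsPath → p.length ≤ q.length := by
  intro u v huv
  obtain ⟨p, hp, hpl⟩ := hconn.exists_path_of_dist u v
  refine ⟨p, ⟨hp, fun q _ => ?_⟩, ?_⟩
  · rw [hpl]
    exact SimpleGraph.dist_le q
  · rintro p' ⟨hp', hmin'⟩
    have h1 : p'.length = G.dist u v :=
      le_antisymm ((hmin' p hp).trans hpl.le) (SimpleGraph.dist_le p')
    exact shortest_unique hconn hbg p'.length huv p' p hp' hp h1 hpl rfl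
end
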